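/- Subject expansion: if Γ ⊢ (N, t) : κ and (M, s) → (N, t), then Γ ⊢ (M, s) : κ. -/

import Mathlib

open Classical

/-- Locations -/
abbrev Loc := ℕ

/-! ### Syntax of λimp (de Bruijn indices) -/

mutual
inductive Val : Type where
  | var : ℕ → Val
  | lam : Comp → Val
inductive Comp : Type where
  | ret  : Val → Comp                     -- unit V
  | bind : Comp → Val → Comp              -- M ⋆ V
  | get  : Loc → Comp → Comp              -- get_ℓ(λ.M)
  | set  : Loc → Val → Comp → Comp        -- set_ℓ(V, M)
end

/-! ### Store and lookup terms -/

mutual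
inductive Store : Type where
  | emp : Store
  | upd : Loc → Lkp → Store → Store       -- set_ℓ(u, s)
inductive Lkp : Type where
  | val : Val → Lkp
  | lkp : Loc → Store → Lkp               -- get_ℓ(s)
end

def Store.dom : Store → Finset Loc
  | .emp => ∅
  | .upd ℓ _ s => insert ℓ s.dom

/-- s ∖ ℓ -/
def Store.erase (ℓ : Loc) : Store → Store
  | .emp => .emp
  | .upd ℓ' u s => if ℓ' = ℓ then s.erase ℓ else .upd ℓ' u (s.erase ℓ)

/-! ### The equational store theory -/

mutual
/-- ⊢ s = t -/
inductive StEq : Store → Store → Prop where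
  | refl (s) : StEq s s
  | symm : StEq s t → StEq t s
  | trans : StEq s t → StEq t r → StEq s r
  | congr : LkEq u u' → StEq s s' → StEq (.upd ℓ u s) (.upd ℓ u' s')
  | setGet (h : ℓ ∈ s.dom) : StEq (.upd ℓ (.lkp ℓ s) s) s
  | overwrite : StEq (.upd ℓ u (.upd ℓ w s)) (.upd ℓ u s)
  | commute (h : ℓ ≠ ℓ') :
      StEq (.upd ℓ u (.upd ℓ' w s)) (.upd ℓ' w (.upd ℓ u s))
/-- ⊢ u = u' -/
inductive LkEq : Lkp → Lkp → Prop where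
  | refl (u) : LkEq u u
  | symm : LkEq u v → LkEq v u
  | trans : LkEq u v → LkEq v w → LkEq u w
  | congr (ℓ) (h : ℓ ∈ s.dom) : StEq s s' → LkEq (.lkp ℓ s) (.lkp ℓ s')
  | getSet : LkEq (.lkp ℓ (.upd ℓ u s)) u
  | getSetNe (h : ℓ ≠ ℓ') : LkEq (.lkp ℓ (.upd ℓ' u s)) (.lkp ℓ s)
end

/-- Extensional equivalence s ≃ t of store terms. -/
def StExtEq (s t : Store) : Prop :=
  s.dom = t.dom ∧ ∀ ℓ ∈ s.dom, LkEq (.lkp ℓ s) (.lkp ℓ t)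

/-! ### Normal forms of stores -/

def Store.size : Store → ℕ
  | .emp => 0
  | .upd _ _ s => s.size + 1

theorem Store.erase_size (ℓ : Loc) : (s : Store) → (s.erase ℓ).size ≤ s.size
  | .emp => le_refl _
  | .upd ℓ' u s => by
      unfold Store.erase
      by_cases h : ℓ' = ℓ
      · simpa [h, Store.size] using le_trans (Store.erase_size ℓ s) (Nat.le_succ _)
      · simpa [h, Store.size] using Nat.succ_le_succ (Store.erase_size ℓ s)

def Store.nf : Store → Store
  | .emp => .emp
  | .upd ℓ u s => .upd ℓ u ((s.erase ℓ).nf)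
termination_by s => s.size
decreasing_by
  simp only [Store.size]
  exact Nat.lt_succ_of_le (Store.erase_size ℓ s)

/-! ### Closedness -/

mutual
def Val.ClosedUnder : ℕ → Val → Prop
  | k, .var n => n < k
  | k, .lam M => Comp.ClosedUnder (k+1) M
def Comp.ClosedUnder : ℕ → Comp → Prop
  | k, .ret V => Val.ClosedUnder k V
  | k, .bind M V => Comp.ClosedUnder k M ∧ Val.ClosedUnder k V
  | k, .get _ M => Comp.ClosedUnder (k+1) M
  | k, .set _ V M => Val.ClosedUnder k V ∧ Comp.ClosedUnder k M
end

mutual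
def Store.Closed : Store → Prop
  | .emp => True
  | .upd _ u s => u.Closed ∧ s.Closed
def Lkp.Closed : Lkp → Prop
  | .val V => Val.ClosedUnder 0 V
  | .lkp _ s => s.Closed
end

/-! ### Substitution -/

mutual
def Val.shiftAux (c : ℕ) : Val → Val
  | .var n => if n < c then .var n else .var (n+1)
  | .lam M => .lam (Comp.shiftAux (c+1) M)
def Comp.shiftAux (c : ℕ) : Comp → Comp
  | .ret V => .ret (V.shiftAux c)
  | .bind M V => .bind (M.shiftAux c) (V.shiftAux c)
  | .get ℓ M => .get ℓ (M.shiftAux (c+1))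
  | .set ℓ V M => .set ℓ (V.shiftAux c) (M.shiftAux c)
end

mutual
/-- capture-avoiding substitution of `W` for the variable `k` in a value -/
def Val.substV (k : ℕ) (W : Val) : Val → Val
  | .var n => if n = k then W else if k < n then .var (n-1) else .var n
  | .lam M => .lam (Comp.substC (k+1) (Val.shiftAux 0 W) M)
/-- capture-avoiding substitution of `W` for the variable `k` in a computation: M[W/k] -/
def Comp.substC (k : ℕ) (W : Val) : Comp → Comp
  | .ret V => .ret (Val.substV k W V)
  | .bind M V => .bind (Comp.substC k W M) (Val.substV k W V)
  | .get ℓ M => .get ℓ (Comp.substC (k+1) (Val.shiftAux 0 W) M)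
  | .set ℓ V M => .set ℓ (Val.substV k W V) (Comp.substC k W M)
end

/-- simultaneous substitution of closed values for the free variables 0,…,n-1 -/
def msubst (Vs : List Val) (M : Comp) : Comp :=
  Vs.foldl (fun acc V => Comp.substC 0 V acc) M

/-! ### Small-step reduction on configurations -/

inductive Red : Comp × Store → Comp × Store → Prop where
  | beta : Red (.bind (.ret V) (.lam M), s) (Comp.substC 0 V M, s)
  | bindl : Red (M, s) (N, t) → Red (.bind M V, s) (.bind N V, t)
  | get : LkEq (.lkp ℓ s) (.val V) → Red (.get ℓ M, s) (Comp.substC 0 V M, s)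
  | set : Red (.set ℓ V M, s) (M, .upd ℓ (.val V) s)

/-- reflexive-transitive closure →* -/
def RedStar : Comp × Store → Comp × Store → Prop := Relation.ReflTransGen Red

/-! ### Big-step convergence -/

inductive BigStep : Comp → Store → Val → Store → Prop where
  | ret : BigStep (.ret V) s V s
  | bind : BigStep M s V s' → BigStep (Comp.substC 0 V N) s' W t →
      BigStep (.bind M (.lam N)) s W t
  | get : LkEq (.lkp ℓ s) (.val V) → BigStep (Comp.substC 0 V M) s W t →
      BigStep (.get ℓ M) s W t
  | set : BigStep M (.upd ℓ (.val V) s) W t → BigStep (.set ℓ V M) s W t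

/-- the partial function M(s): the result (V,t) if (M,s) ⇓ (V,t), and ⊥ (i.e. `none`) otherwise -/
noncomputable def run (M : Comp) (s : Store) : Option (Val × Store) :=
  if h : ∃ p : Val × Store, BigStep M s p.1 p.2 then some h.choose else none

/-! ### Intersection types of the four sorts -/

mutual
/-- value types δ -/
inductive TyD : Type where
  | arrow : TyD → TyT → TyD
  | inter : TyD → TyD → TyD
  | omega : TyD
/-- store types σ -/
inductive TyS : Type where
  | loc : Loc → TyD → TyS
  | inter : TyS → TyS → TyS
  | omega : TyS
/-- result types κ -/
inductive TyC : Type where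
  | prod : TyD → TyS → TyC
  | inter : TyC → TyC → TyC
  | omega : TyC
/-- computation types τ -/
inductive TyT : Type where
  | arrow : TyS → TyC → TyT
  | inter : TyT → TyT → TyT
  | omega : TyT
end

def TyS.domS : TyS → Finset Loc
  | .loc ℓ _ => {ℓ}
  | .inter σ σ' => σ.domS ∪ σ'.domS
  | .omega => ∅

/-! ### Subtyping -/

mutual
inductive SubD : TyD → TyD → Prop where
  | refl (δ) : SubD δ δ
  | trans : SubD δ₁ δ₂ → SubD δ₂ δ₃ → SubD δ₁ δ₃
  | leOmega (δ) : SubD δ .omega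
  | interLeft : SubD (TyD.inter δ δ') δ
  | interRight : SubD (TyD.inter δ δ') δ'
  | interGlb : SubD δ δ₁ → SubD δ δ₂ → SubD δ (TyD.inter δ₁ δ₂)
  | interMono : SubD δ₁ δ₁' → SubD δ₂ δ₂' → SubD (TyD.inter δ₁ δ₂) (TyD.inter δ₁' δ₂')
  | omegaArrow : SubD .omega (.arrow .omega .omega)
  | arrowInter : SubD ((TyD.arrow δ τ).inter (.arrow δ τ')) (TyD.arrow δ (TyT.inter τ τ'))
  | arrowMono : SubD δ' δ → SubT τ τ' → SubD (.arrow δ τ) (.arrow δ' τ')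
inductive SubS : TyS → TyS → Prop where
  | refl (σ) : SubS σ σ
  | trans : SubS σ₁ σ₂ → SubS σ₂ σ₃ → SubS σ₁ σ₃
  | leOmega (σ) : SubS σ .omega
  | interLeft : SubS (TyS.inter σ σ') σ
  | interRight : SubS (TyS.inter σ σ') σ'
  | interGlb : SubS σ σ₁ → SubS σ σ₂ → SubS σ (TyS.inter σ₁ σ₂)
  | interMono : SubS σ₁ σ₁' → SubS σ₂ σ₂' → SubS (TyS.inter σ₁ σ₂) (TyS.inter σ₁' σ₂')
  | locInter : SubS ((TyS.loc ℓ δ).inter (.loc ℓ δ')) (TyS.loc ℓ (TyD.inter δ δ'))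
  | locMono : SubD δ δ' → SubS (.loc ℓ δ) (.loc ℓ δ')
inductive SubC : TyC → TyC → Prop where
  | refl (κ) : SubC κ κ
  | trans : SubC κ₁ κ₂ → SubC κ₂ κ₃ → SubC κ₁ κ₃
  | leOmega (κ) : SubC κ .omega
  | interLeft : SubC (TyC.inter κ κ') κ
  | interRight : SubC (TyC.inter κ κ') κ'
  | interGlb : SubC κ κ₁ → SubC κ κ₂ → SubC κ (TyC.inter κ₁ κ₂)
  | interMono : SubC κ₁ κ₁' → SubC κ₂ κ₂' → SubC (TyC.inter κ₁ κ₂) (TyC.inter κ₁' κ₂')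
  | omegaProd : SubC .omega (.prod .omega .omega)
  | prodInter : SubC ((TyC.prod δ σ).inter (.prod δ' σ')) (TyC.prod (TyD.inter δ δ') (TyS.inter σ σ'))
  | prodMono : SubD δ δ' → SubS σ σ' → SubC (.prod δ σ) (.prod δ' σ')
inductive SubT : TyT → TyT → Prop where
  | refl (τ) : SubT τ τ
  | trans : SubT τ₁ τ₂ → SubT τ₂ τ₃ → SubT τ₁ τ₃
  | leOmega (τ) : SubT τ .omega
  | interLeft : SubT (TyT.inter τ τ') τ
  | interRight : SubT (TyT.inter τ τ') τ'
  | interGlb : SubT τ τ₁ → SubT τ τ₂ → SubT τ (TyT.inter τ₁ τ₂)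
  | interMono : SubT τ₁ τ₁' → SubT τ₂ τ₂' → SubT (TyT.inter τ₁ τ₂) (TyT.inter τ₁' τ₂')
  | omegaArrow : SubT .omega (.arrow .omega .omega)
  | arrowInter : SubT ((TyT.arrow σ κ).inter (.arrow σ κ')) (TyT.arrow σ (TyC.inter κ κ'))
  | arrowMono : SubS σ' σ → SubC κ κ' → SubT (.arrow σ κ) (.arrow σ' κ')
end

/-! ### Finite intersections -/

def InterD (l : List TyD) : TyD := l.foldr TyD.inter TyD.omega
def InterS (l : List TyS) : TyS := l.foldr TyS.inter TyS.omega
def InterC (l : List TyC) : TyC := l.foldr TyC.inter TyC.omega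
def InterT (l : List TyT) : TyT := l.foldr TyT.inter TyT.omega

/-! ### Type assignment -/

/-- typing contexts (de Bruijn) -/
abbrev Ctx := List TyD

mutual
inductive TypV : Ctx → Val → TyD → Prop where
  | var : Γ[n]? = some δ → TypV Γ (.var n) δ
  | lam : TypC (δ :: Γ) M τ → TypV Γ (.lam M) (.arrow δ τ)
  | omega : TypV Γ V .omega
  | inter : TypV Γ V δ → TypV Γ V δ' → TypV Γ V (TyD.inter δ δ')
  | sub : TypV Γ V δ → SubD δ δ' → TypV Γ V δ'
inductive TypC : Ctx → Comp → TyT → Prop where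
  | ret : TypV Γ V δ → TypC Γ (.ret V) (.arrow σ (.prod δ σ))
  | bind : TypC Γ M (.arrow σ (.prod δ' σ')) →
      TypV Γ V (.arrow δ' (.arrow σ' (.prod δ'' σ''))) →
      TypC Γ (.bind M V) (.arrow σ (.prod δ'' σ''))
  | get : TypC (δ :: Γ) M (.arrow σ κ) →
      TypC Γ (.get ℓ M) (.arrow ((TyS.loc ℓ δ).inter σ) κ)
  | set : TypV Γ V δ → TypC Γ M (.arrow ((TyS.loc ℓ δ).inter σ) κ) →
      ℓ ∉ σ.domS → TypC Γ (.set ℓ V M) (.arrow σ κ)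
  | omega : TypC Γ M .omega
  | inter : TypC Γ M τ → TypC Γ M τ' → TypC Γ M (TyT.inter τ τ')
  | sub : TypC Γ M τ → SubT τ τ' → TypC Γ M τ'
end

mutual
inductive TypS : Ctx → Store → TyS → Prop where
  | updA : TypL Γ u δ → TypS Γ (.upd ℓ u s) (.loc ℓ δ)
  | updB : TypS Γ s (.loc ℓ' δ) → ℓ ≠ ℓ' → TypS Γ (.upd ℓ u s) (.loc ℓ' δ)
  | omega : TypS Γ s .omega
  | inter : TypS Γ s σ → TypS Γ s σ' → TypS Γ s (TyS.inter σ σ')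
  | sub : TypS Γ s σ → SubS σ σ' → TypS Γ s σ'
inductive TypL : Ctx → Lkp → TyD → Prop where
  | val : TypV Γ V δ → TypL Γ (.val V) δ
  | lkp : TypS Γ s (.loc ℓ δ) → TypL Γ (.lkp ℓ s) δ
  | omega : TypL Γ u .omega
  | inter : TypL Γ u δ → TypL Γ u δ' → TypL Γ u (TyD.inter δ δ')
  | sub : TypL Γ u δ → SubD δ δ' → TypL Γ u δ'
end

inductive TypConf : Ctx → Comp → Store → TyC → Prop where
  | conf : TypC Γ M (.arrow σ κ) → TypS Γ s σ → TypConf Γ M s κ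
  | omega : TypConf Γ M s .omega
  | inter : TypConf Γ M s κ → TypConf Γ M s κ' → TypConf Γ M s (TyC.inter κ κ')
  | sub : TypConf Γ M s κ → SubC κ κ' → TypConf Γ M s κ'

/-! ### Saturated sets -/

mutual
def SatD : TyD → Set Val
  | .omega => {V | Val.ClosedUnder 0 V}
  | .arrow δ τ =>
      {V | Val.ClosedUnder 0 V ∧ ∀ W ∈ SatD δ, Comp.bind (.ret W) V ∈ SatT τ}
  | .inter δ δ' => SatD δ ∩ SatD δ'
def SatS : TyS → Set Store
  | .omega => {s | s.Closed}
  | .loc ℓ δ =>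
      {s | s.Closed ∧ ℓ ∈ s.dom ∧ ∃ V ∈ SatD δ, LkEq (.lkp ℓ s) (.val V)}
  | .inter σ σ' => SatS σ ∩ SatS σ'
def SatC : TyC → Set (Option (Val × Store))
  | .omega => {r | ∀ V t, r = some (V, t) → Val.ClosedUnder 0 V ∧ Store.Closed t}
  | .prod δ σ => {r | ∃ V t, r = some (V, t) ∧ V ∈ SatD δ ∧ t ∈ SatS σ}
  | .inter κ κ' => SatC κ ∩ SatC κ'
def SatT : TyT → Set Comp
  | .omega => {M | Comp.ClosedUnder 0 M}
  | .arrow σ κ => {M | Comp.ClosedUnder 0 M ∧ ∀ s ∈ SatS σ, run M s ∈ SatC κ}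
  | .inter τ τ' => SatT τ ∩ SatT τ'
end

/-! #### Helper lemmas for subject expansion -/

/-- ω × ω -/
abbrev pw : TyC := TyC.prod .omega .omega

lemma subC_pw (κ : TyC) : SubC κ pw := SubC.trans (SubC.leOmega κ) SubC.omegaProd

lemma subT_omega_arrow_pw (σ : TyS) : SubT .omega (.arrow σ pw) :=
  SubT.trans SubT.omegaArrow (SubT.arrowMono (SubS.leOmega σ) SubC.omegaProd)

lemma subT_le_arrow_pw (τ : TyT) (σ : TyS) : SubT τ (.arrow σ pw) :=
  SubT.trans (SubT.leOmega τ) (subT_omega_arrow_pw σ)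

lemma typC_arrow_pw (Γ : Ctx) (M : Comp) (σ : TyS) : TypC Γ M (.arrow σ pw) :=
  TypC.sub TypC.omega (subT_le_arrow_pw _ σ)

open Classical in
noncomputable def appT (σ : TyS) : TyT → TyC
  | .omega => pw
  | .arrow σ₀ κ₀ => if SubS σ σ₀ then .inter κ₀ pw else pw
  | .inter τ₁ τ₂ => .inter (appT σ τ₁) (appT σ τ₂)

lemma appT_le_pw (σ : TyS) : ∀ τ, SubC (appT σ τ) pw
  | .omega => SubC.refl pw
  | .arrow σ₀ κ₀ => by
      unfold appT; split
      · exact SubC.interRight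
      · exact SubC.refl pw
  | .inter τ₁ τ₂ => SubC.trans SubC.interLeft (appT_le_pw σ τ₁)

lemma appT_sound (σ : TyS) : ∀ τ, SubT τ (.arrow σ (appT σ τ))
  | .omega => subT_omega_arrow_pw σ
  | .arrow σ₀ κ₀ => by
      unfold appT; split
      · next h =>
          exact SubT.trans
            (SubT.interGlb (SubT.arrowMono h (SubC.refl _)) (subT_le_arrow_pw _ σ))
            SubT.arrowInter
      · exact subT_le_arrow_pw _ σ
  | .inter τ₁ τ₂ =>
      SubT.trans (SubT.interGlb
        (SubT.trans SubT.interLeft (appT_sound σ τ₁))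
        (SubT.trans SubT.interRight (appT_sound σ τ₂))) SubT.arrowInter

lemma appT_mono {τ τ' : TyT} (h : SubT τ τ') (σ : TyS) : SubC (appT σ τ) (appT σ τ') := by
  induction h using SubT.rec
    (motive_1 := fun _ _ _ => True) (motive_2 := fun _ _ _ => True)
    (motive_3 := fun _ _ _ => True)
  all_goals try (intros; exact trivial)
  -- SubT cases in order
  · exact SubC.refl _
  · next ih1 ih2 => exact SubC.trans ih1 ih2
  · exact appT_le_pw σ _
  · exact SubC.interLeft
  · exact SubC.interRight
  · next ih1 ih2 => exact SubC.interGlb ih1 ih2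
  · next ih1 ih2 => exact SubC.interMono ih1 ih2
  · show SubC pw (appT σ (.arrow .omega .omega))
    unfold appT
    rw [if_pos (SubS.leOmega σ)]
    exact SubC.interGlb (SubC.leOmega pw) (SubC.refl pw)
  · next σ₀ κ κ' =>
      show SubC (TyC.inter (appT σ (.arrow σ₀ κ)) (appT σ (.arrow σ₀ κ')))
        (appT σ (.arrow σ₀ (.inter κ κ')))
      unfold appT
      by_cases h : SubS σ σ₀
      · rw [if_pos h, if_pos h, if_pos h]
        exact SubC.interGlb
          (SubC.interGlb (SubC.trans SubC.interLeft SubC.interLeft)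
            (SubC.trans SubC.interRight SubC.interLeft))
          (SubC.trans SubC.interLeft SubC.interRight)
      · rw [if_neg h, if_neg h, if_neg h]
        exact SubC.interLeft
  · rename_i σa σb κ₁ κ₂ hS hC t1 t2
    unfold appT
    by_cases h : SubS σ σa
    · rw [if_pos (SubS.trans h hS), if_pos h]
      exact SubC.interMono hC (SubC.refl pw)
    · rw [if_neg h]
      by_cases h' : SubS σ σb
      · rw [if_pos h']; exact SubC.interRight
      · rw [if_neg h']; exact SubC.refl pw

lemma subT_arrow_inv {τ : TyT} {σ : TyS} {κ : TyC} (h : SubT τ (.arrow σ κ)) :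
    SubC (appT σ τ) κ := by
  have := appT_mono h σ
  simp only [appT] at this
  rw [if_pos (SubS.refl σ)] at this
  exact SubC.trans this SubC.interLeft

def appS (ℓ : Loc) : TyS → TyD
  | .loc ℓ' δ => if ℓ' = ℓ then δ else .omega
  | .inter σ₁ σ₂ => .inter (appS ℓ σ₁) (appS ℓ σ₂)
  | .omega => .omega

def eraseS (ℓ : Loc) : TyS → TyS
  | .loc ℓ' δ => if ℓ' = ℓ then .omega else .loc ℓ' δ
  | .inter σ₁ σ₂ => .inter (eraseS ℓ σ₁) (eraseS ℓ σ₂)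
  | .omega => .omega

lemma appS_mono {σ σ' : TyS} (h : SubS σ σ') (ℓ : Loc) :
    SubD (appS ℓ σ) (appS ℓ σ') := by
  induction h using SubS.rec
    (motive_1 := fun _ _ _ => True) (motive_3 := fun _ _ _ => True)
    (motive_4 := fun _ _ _ => True)
  all_goals try (intros; exact trivial)
  · exact SubD.refl _
  · rename_i ih1 ih2; exact SubD.trans ih1 ih2
  · exact SubD.leOmega _
  · exact SubD.interLeft
  · exact SubD.interRight
  · rename_i ih1 ih2; exact SubD.interGlb ih1 ih2
  · rename_i ih1 ih2; exact SubD.interMono ih1 ih2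
  · rename_i ℓ₀ δ δ'
    show SubD (TyD.inter (appS ℓ (.loc ℓ₀ δ)) (appS ℓ (.loc ℓ₀ δ')))
      (appS ℓ (.loc ℓ₀ (.inter δ δ')))
    unfold appS
    by_cases h : ℓ₀ = ℓ
    · rw [if_pos h, if_pos h, if_pos h]; exact SubD.refl _
    · rw [if_neg h, if_neg h, if_neg h]; exact SubD.interLeft
  · rename_i δ δ' ℓ₀ hd _
    show SubD (appS ℓ (.loc ℓ₀ δ)) (appS ℓ (.loc ℓ₀ δ'))
    unfold appS
    by_cases h : ℓ₀ = ℓ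
    · rw [if_pos h, if_pos h]; exact hd
    · rw [if_neg h, if_neg h]; exact SubD.refl _

lemma eraseS_mono {σ σ' : TyS} (h : SubS σ σ') (ℓ : Loc) :
    SubS (eraseS ℓ σ) (eraseS ℓ σ') := by
  induction h using SubS.rec
    (motive_1 := fun _ _ _ => True) (motive_3 := fun _ _ _ => True)
    (motive_4 := fun _ _ _ => True)
  all_goals try (intros; exact trivial)
  · exact SubS.refl _
  · rename_i ih1 ih2; exact SubS.trans ih1 ih2
  · exact SubS.leOmega _
  · exact SubS.interLeft
  · exact SubS.interRight
  · rename_i ih1 ih2; exact SubS.interGlb ih1 ih2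
  · rename_i ih1 ih2; exact SubS.interMono ih1 ih2
  · rename_i ℓ₀ δ δ'
    show SubS (TyS.inter (eraseS ℓ (.loc ℓ₀ δ)) (eraseS ℓ (.loc ℓ₀ δ')))
      (eraseS ℓ (.loc ℓ₀ (.inter δ δ')))
    unfold eraseS
    by_cases h : ℓ₀ = ℓ
    · rw [if_pos h, if_pos h, if_pos h]; exact SubS.interLeft
    · rw [if_neg h, if_neg h, if_neg h]; exact SubS.locInter
  · rename_i δ δ' ℓ₀ hd _
    show SubS (eraseS ℓ (.loc ℓ₀ δ)) (eraseS ℓ (.loc ℓ₀ δ'))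
    unfold eraseS
    by_cases h : ℓ₀ = ℓ
    · rw [if_pos h, if_pos h]; exact SubS.refl _
    · rw [if_neg h, if_neg h]; exact SubS.locMono hd

lemma eraseS_domS (ℓ : Loc) : ∀ σ : TyS, ℓ ∉ (eraseS ℓ σ).domS
  | .loc ℓ' δ => by
      unfold eraseS
      by_cases h : ℓ' = ℓ
      · rw [if_pos h]; simp [TyS.domS]
      · rw [if_neg h]; simp [TyS.domS]; exact fun hh => h hh.symm
  | .inter σ₁ σ₂ => by
      unfold eraseS
      simp only [TyS.domS, Finset.mem_union]
      rintro (h | h)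
      · exact eraseS_domS ℓ σ₁ h
      · exact eraseS_domS ℓ σ₂ h
  | .omega => by simp [eraseS, TyS.domS]

lemma rebuildS (ℓ : Loc) : ∀ σ : TyS,
    SubS (TyS.inter (.loc ℓ (appS ℓ σ)) (eraseS ℓ σ)) σ
  | .omega => SubS.leOmega _
  | .loc ℓ' δ => by
      unfold appS eraseS
      by_cases h : ℓ' = ℓ
      · rw [if_pos h, if_pos h]; subst h; exact SubS.interLeft
      · rw [if_neg h, if_neg h]; exact SubS.interRight
  | .inter σ₁ σ₂ => by
      unfold appS eraseS
      refine SubS.interGlb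
        (SubS.trans (SubS.interMono (SubS.locMono SubD.interLeft) SubS.interLeft) (rebuildS ℓ σ₁))
        (SubS.trans (SubS.interMono (SubS.locMono SubD.interRight) SubS.interRight) (rebuildS ℓ σ₂))

lemma le_eraseS (ℓ : Loc) : ∀ σ : TyS, SubS σ (eraseS ℓ σ)
  | .omega => SubS.refl _
  | .loc ℓ' δ => by
      unfold eraseS
      by_cases h : ℓ' = ℓ
      · rw [if_pos h]; exact SubS.leOmega _
      · rw [if_neg h]; exact SubS.refl _
  | .inter σ₁ σ₂ => SubS.interMono (le_eraseS ℓ σ₁) (le_eraseS ℓ σ₂)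

lemma eraseS_idem (ℓ : Loc) : ∀ σ : TyS, eraseS ℓ (eraseS ℓ σ) = eraseS ℓ σ
  | .omega => rfl
  | .loc ℓ' δ => by
      by_cases h : ℓ' = ℓ <;> simp [eraseS, h]
  | .inter σ₁ σ₂ => by
      simp only [eraseS]; rw [eraseS_idem ℓ σ₁, eraseS_idem ℓ σ₂]

lemma eraseS_comm (ℓ ℓ' : Loc) : ∀ σ : TyS,
    eraseS ℓ (eraseS ℓ' σ) = eraseS ℓ' (eraseS ℓ σ)
  | .omega => rfl
  | .loc ℓ₀ δ => by
      by_cases h : ℓ₀ = ℓ' <;> by_cases h' : ℓ₀ = ℓ <;>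
        simp [eraseS, h, h'] <;> split_ifs <;> simp_all [eraseS]
  | .inter σ₁ σ₂ => by
      simp only [eraseS]; rw [eraseS_comm ℓ ℓ' σ₁, eraseS_comm ℓ ℓ' σ₂]

lemma appS_eraseS_ne {ℓ ℓ' : Loc} (h : ℓ ≠ ℓ') : ∀ σ : TyS,
    appS ℓ (eraseS ℓ' σ) = appS ℓ σ
  | .omega => rfl
  | .loc ℓ₀ δ => by
      by_cases h0 : ℓ₀ = ℓ' <;> by_cases h1 : ℓ₀ = ℓ <;>
        simp_all [eraseS, appS]
  | .inter σ₁ σ₂ => by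
      simp only [eraseS, appS]
      rw [appS_eraseS_ne h σ₁, appS_eraseS_ne h σ₂]

lemma typL_val_inv {Γ : Ctx} {u : Lkp} {δ : TyD} (h : TypL Γ u δ) :
    ∀ V, u = .val V → TypV Γ V δ := by
  induction h using TypL.rec (motive_1 := fun _ _ _ => True)
  all_goals try (intros; exact trivial)
  · rename_i V0 δ0 hV
    intro V1 heq; injection heq with h; subst h; exact hV
  · intro V1 heq; exact absurd heq (by simp)
  · intro V1 _; exact TypV.omega
  · rename_i ih1 ih2
    intro V1 heq; exact TypV.inter (ih1 V1 heq) (ih2 V1 heq)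
  · rename_i hsub ih
    intro V1 heq; exact TypV.sub (ih V1 heq) hsub

lemma invUpd {Γ : Ctx} {s : Store} {σ : TyS} (h : TypS Γ s σ) :
    ∀ ℓ u s₀, s = .upd ℓ u s₀ → TypL Γ u (appS ℓ σ) ∧ TypS Γ s₀ (eraseS ℓ σ) := by
  induction h using TypS.rec (motive_2 := fun _ _ _ => True)
  all_goals try (intros; exact trivial)
  · rename_i u δ ℓ0 s0 hL _
    intro ℓ1 u1 s1 heq
    cases heq
    simp only [appS, eraseS, if_pos rfl]
    exact ⟨hL, TypS.omega⟩
  · rename_i s0 ℓ' δ ℓ0 u hTS hne _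
    intro ℓ1 u1 s1 heq
    cases heq
    have hne' : ℓ' ≠ ℓ0 := fun hh => hne hh.symm
    simp only [appS, eraseS, if_neg hne']
    exact ⟨TypL.omega, hTS⟩
  · intro ℓ1 u1 s1 _; exact ⟨TypL.omega, TypS.omega⟩
  · rename_i ih1 ih2
    intro ℓ1 u1 s1 heq
    obtain ⟨a1, b1⟩ := ih1 ℓ1 u1 s1 heq
    obtain ⟨a2, b2⟩ := ih2 ℓ1 u1 s1 heq
    exact ⟨TypL.inter a1 a2, TypS.inter b1 b2⟩
  · rename_i hsub ih
    intro ℓ1 u1 s1 heq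
    obtain ⟨a1, b1⟩ := ih ℓ1 u1 s1 heq
    exact ⟨TypL.sub a1 (appS_mono hsub ℓ1), TypS.sub b1 (eraseS_mono hsub ℓ1)⟩

lemma reconUpd {Γ : Ctx} {ℓ : Loc} {u : Lkp} {s : Store} : ∀ σ : TyS,
    TypL Γ u (appS ℓ σ) → TypS Γ s (eraseS ℓ σ) → TypS Γ (.upd ℓ u s) σ
  | .omega, _, _ => TypS.omega
  | .loc ℓ' δ, h1, h2 => by
      by_cases h : ℓ' = ℓ
      · subst h
        simp only [appS, if_pos rfl] at h1
        exact TypS.updA h1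
      · simp only [eraseS, if_neg h] at h2
        exact TypS.updB h2 (fun hh => h hh.symm)
  | .inter σ₁ σ₂, h1, h2 => by
      simp only [appS] at h1
      simp only [eraseS] at h2
      exact TypS.inter
        (reconUpd σ₁ (TypL.sub h1 SubD.interLeft) (TypS.sub h2 SubS.interLeft))
        (reconUpd σ₂ (TypL.sub h1 SubD.interRight) (TypS.sub h2 SubS.interRight))

lemma domTy {Γ : Ctx} {ℓ : Loc} : ∀ {s : Store}, ℓ ∈ s.dom → TypS Γ s (.loc ℓ .omega)
  | .emp, h => by simp [Store.dom] at h
  | .upd ℓ' u s, h => by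
      by_cases h0 : ℓ' = ℓ
      · subst h0; exact TypS.updA TypL.omega
      · have : ℓ ∈ s.dom := by
          simp [Store.dom] at h
          rcases h with h | h
          · exact absurd h.symm h0
          · exact h
        exact TypS.updB (domTy this) h0

lemma locApp {Γ : Ctx} {ℓ : Loc} {s : Store} (hdom : ℓ ∈ s.dom) :
    ∀ σ : TyS, TypS Γ s σ → TypS Γ s (.loc ℓ (appS ℓ σ))
  | .omega, _ => domTy hdom
  | .loc ℓ' δ, h => by
      by_cases h0 : ℓ' = ℓ
      · subst h0; simpa only [appS, if_pos rfl, ↓reduceIte] using h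
      · simp only [appS, if_neg h0]; exact domTy hdom
  | .inter σ₁ σ₂, h =>
      TypS.sub
        (TypS.inter (locApp hdom σ₁ (TypS.sub h SubS.interLeft))
          (locApp hdom σ₂ (TypS.sub h SubS.interRight)))
        SubS.locInter

lemma updIrrel {Γ : Ctx} {ℓ : Loc} {u : Lkp} {s : Store} :
    ∀ σ : TyS, ℓ ∉ σ.domS → TypS Γ s σ → TypS Γ (.upd ℓ u s) σ
  | .omega, _, _ => TypS.omega
  | .loc ℓ' δ, hd, h => by
      have : ℓ ≠ ℓ' := by simp [TyS.domS] at hd; exact hd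
      exact TypS.updB h this
  | .inter σ₁ σ₂, hd, h => by
      simp only [TyS.domS, Finset.mem_union, not_or] at hd
      exact TypS.inter (updIrrel σ₁ hd.1 (TypS.sub h SubS.interLeft))
        (updIrrel σ₂ hd.2 (TypS.sub h SubS.interRight))

lemma genLkp {Γ : Ctx} {u : Lkp} {δ : TyD} (h : TypL Γ u δ) :
    ∀ ℓ t, u = .lkp ℓ t →
      ∃ δ₀, SubD δ₀ δ ∧ (SubD .omega δ₀ ∨ TypS Γ t (.loc ℓ δ₀)) := by
  induction h using TypL.rec (motive_1 := fun _ _ _ => True)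
  all_goals try (intros; exact trivial)
  · intro ℓ1 t heq; exact absurd heq (by simp)
  · rename_i s0 ℓ0 δ0 hTS _
    intro ℓ1 t heq
    injection heq with h1 h2; subst h1; subst h2
    exact ⟨δ0, SubD.refl _, Or.inr hTS⟩
  · intro ℓ1 t _; exact ⟨.omega, SubD.refl _, Or.inl (SubD.refl _)⟩
  · rename_i ih1 ih2
    intro ℓ1 t heq
    obtain ⟨δ₁, hle1, hc1⟩ := ih1 ℓ1 t heq
    obtain ⟨δ₂, hle2, hc2⟩ := ih2 ℓ1 t heq
    rcases hc1 with hω1 | ht1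
    · rcases hc2 with hω2 | ht2
      · exact ⟨.omega, SubD.interGlb (SubD.trans hω1 hle1) (SubD.trans hω2 hle2),
          Or.inl (SubD.refl _)⟩
      · exact ⟨δ₂, SubD.interGlb
          (SubD.trans (SubD.trans (SubD.leOmega _) hω1) hle1) hle2, Or.inr ht2⟩
    · rcases hc2 with hω2 | ht2
      · exact ⟨δ₁, SubD.interGlb hle1
          (SubD.trans (SubD.trans (SubD.leOmega _) hω2) hle2), Or.inr ht1⟩
      · exact ⟨.inter δ₁ δ₂, SubD.interMono hle1 hle2,
          Or.inr (TypS.sub (TypS.inter ht1 ht2) SubS.locInter)⟩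
  · rename_i hsub ih
    intro ℓ1 t heq
    obtain ⟨δ₀, hle, hc⟩ := ih ℓ1 t heq
    exact ⟨δ₀, SubD.trans hle hsub, hc⟩

lemma lkpTypS {Γ : Ctx} {ℓ : Loc} {s : Store} {δ : TyD}
    (hdom : ℓ ∈ s.dom) (h : TypL Γ (.lkp ℓ s) δ) : TypS Γ s (.loc ℓ δ) := by
  obtain ⟨δ₀, hle, hc⟩ := genLkp h ℓ s rfl
  rcases hc with hω | ht
  · exact TypS.sub (domTy hdom) (SubS.locMono (SubD.trans hω hle))
  · exact TypS.sub ht (SubS.locMono hle)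

lemma stDom {s t : Store} (h : StEq s t) : s.dom = t.dom := by
  refine StEq.rec (motive_1 := fun s t _ => s.dom = t.dom)
    (motive_2 := fun _ _ _ => True)
    ?_ ?_ ?_ ?_ ?_ ?_ ?_ ?_ ?_ ?_ ?_ ?_ ?_ h
  · intro s; rfl
  · intro s t a ih; exact ih.symm
  · intro s t r a a1 ih1 ih2; exact ih1.trans ih2
  · intro u u' s0 s0' ℓ a a1 _ ihS; simp [Store.dom, ihS]
  · intro ℓ s0 hmem; simp [Store.dom, Finset.insert_eq_self.2 hmem]
  · intro ℓ u w s0; simp [Store.dom]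
  · intro ℓ ℓ' u w s0 hne; simp only [Store.dom]; exact Finset.insert_comm _ _ _
  · intro u; trivial
  · intros; trivial
  · intros; trivial
  · intros; trivial
  · intros; trivial
  · intros; trivial

def look (ℓ : Loc) : Store → Option Lkp
  | .emp => none
  | .upd ℓ' u s => if ℓ' = ℓ then some u else look ℓ s

lemma look_mem {ℓ : Loc} : ∀ {s : Store} {u : Lkp}, look ℓ s = some u → ℓ ∈ s.dom
  | .emp, u, h => by simp [look] at h
  | .upd ℓ' u' s, u, h => by
      simp only [look] at h
      split at h
      · next hc => simp [Store.dom, hc]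
      · next hc =>
          simp only [Store.dom, Finset.mem_insert]
          exact Or.inr (look_mem h)

inductive DefU : Lkp → Prop where
  | val (V) : DefU (.val V)
  | lkp {ℓ s u} : look ℓ s = some u → DefU u → DefU (.lkp ℓ s)

lemma defU_lkp_iff {ℓ : Loc} {s : Store} :
    DefU (.lkp ℓ s) ↔ ∃ u, look ℓ s = some u ∧ DefU u := by
  constructor
  · intro h
    cases h with
    | lkp h1 h2 => exact ⟨_, h1, h2⟩
  · rintro ⟨u, h1, h2⟩; exact DefU.lkp h1 h2

lemma defU_resp {u v : Lkp} (h : LkEq u v) : DefU u ↔ DefU v := by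
  refine LkEq.rec (motive_1 := fun s t _ => ∀ ℓ, DefU (.lkp ℓ s) ↔ DefU (.lkp ℓ t))
    (motive_2 := fun u v _ => DefU u ↔ DefU v)
    ?_ ?_ ?_ ?_ ?_ ?_ ?_ ?_ ?_ ?_ ?_ ?_ ?_ h
  · intro s ℓ; exact Iff.rfl
  · intro s t a ih ℓ; exact (ih ℓ).symm
  · intro s t r a a1 ih1 ih2 ℓ; exact (ih1 ℓ).trans (ih2 ℓ)
  · intro u0 u0' s0 s0' ℓ0 a a1 ihU ihS ℓ1
    rw [defU_lkp_iff, defU_lkp_iff]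
    simp only [look]
    by_cases hc : ℓ0 = ℓ1
    · rw [if_pos hc, if_pos hc]
      constructor
      · rintro ⟨x, hx, dx⟩
        injection hx with hx; subst hx
        exact ⟨u0', rfl, ihU.mp dx⟩
      · rintro ⟨x, hx, dx⟩
        injection hx with hx; subst hx
        exact ⟨u0, rfl, ihU.mpr dx⟩
    · rw [if_neg hc, if_neg hc]
      exact defU_lkp_iff.symm.trans ((ihS ℓ1).trans defU_lkp_iff)
  · intro ℓ0 s0 hmem ℓ1
    rw [defU_lkp_iff, defU_lkp_iff]
    simp only [look]
    by_cases hc : ℓ0 = ℓ1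
    · subst hc
      rw [if_pos rfl]
      constructor
      · rintro ⟨x, hx, dx⟩
        injection hx with hx; subst hx
        exact defU_lkp_iff.mp dx
      · rintro ⟨x, hx, dx⟩
        exact ⟨.lkp ℓ0 s0, rfl, DefU.lkp hx dx⟩
    · rw [if_neg hc]
  · intro ℓ0 u0 w0 s0 ℓ1
    rw [defU_lkp_iff, defU_lkp_iff]
    simp only [look]
    by_cases hc : ℓ0 = ℓ1 <;> simp [hc]
  · intro ℓa ℓb u0 w0 s0 hne ℓ1
    rw [defU_lkp_iff, defU_lkp_iff]
    simp only [look]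
    by_cases h1 : ℓa = ℓ1 <;> by_cases h2 : ℓb = ℓ1
    · exact absurd (h1.trans h2.symm) hne
    · simp [h1, h2]
    · simp [h1, h2]
    · simp [h1, h2]
  · intro u0; exact Iff.rfl
  · intro u0 v0 a ih; exact ih.symm
  · intro u0 v0 w0 a a1 ih1 ih2; exact ih1.trans ih2
  · intro s0 s0' ℓ0 hmem a ihS; exact ihS ℓ0
  · intro ℓ0 u0 s0
    rw [defU_lkp_iff]
    simp only [look, if_pos rfl]
    constructor
    · rintro ⟨x, hx, dx⟩
      injection hx with hx; subst hx
      exact dx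
    · intro d; exact ⟨u0, rfl, d⟩
  · intro ℓa ℓb u0 s0 hne
    rw [defU_lkp_iff, defU_lkp_iff]
    have hnb : ¬ℓb = ℓa := fun hh => hne hh.symm
    simp only [look, if_neg hnb]

lemma dom_of_lkeq {ℓ : Loc} {s : Store} {V : Val}
    (h : LkEq (.lkp ℓ s) (.val V)) : ℓ ∈ s.dom := by
  have hd := (defU_resp h).mpr (DefU.val V)
  obtain ⟨u, hu, _⟩ := defU_lkp_iff.mp hd
  exact look_mem hu

lemma commuteAux {Γ : Ctx} {ℓ ℓ' : Loc} {u w : Lkp} {s : Store} {σ : TyS}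
    (hne : ℓ ≠ ℓ') (h : TypS Γ (.upd ℓ u (.upd ℓ' w s)) σ) :
    TypS Γ (.upd ℓ' w (.upd ℓ u s)) σ := by
  obtain ⟨h1, h2⟩ := invUpd h ℓ u _ rfl
  obtain ⟨h3, h4⟩ := invUpd h2 ℓ' w s rfl
  rw [appS_eraseS_ne (Ne.symm hne)] at h3
  refine reconUpd σ h3 (reconUpd _ ?_ ?_)
  · rw [appS_eraseS_ne hne]; exact h1
  · rw [eraseS_comm]; exact h4

lemma lkResp {Γ : Ctx} {u v : Lkp} (h : LkEq u v) :
    ∀ δ, TypL Γ u δ ↔ TypL Γ v δ := by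
  refine LkEq.rec (motive_1 := fun s t _ => ∀ σ, TypS Γ s σ ↔ TypS Γ t σ)
    (motive_2 := fun u v _ => ∀ δ, TypL Γ u δ ↔ TypL Γ v δ)
    ?_ ?_ ?_ ?_ ?_ ?_ ?_ ?_ ?_ ?_ ?_ ?_ ?_ h
  · intro s σ; exact Iff.rfl
  · intro s t a ih σ; exact (ih σ).symm
  · intro s t r a a1 ih1 ih2 σ; exact (ih1 σ).trans (ih2 σ)
  · intro u0 u0' s0 s0' ℓ0 a a1 ihU ihS σ
    constructor
    · intro h
      obtain ⟨h1, h2⟩ := invUpd h ℓ0 u0 s0 rfl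
      exact reconUpd σ ((ihU _).mp h1) ((ihS _).mp h2)
    · intro h
      obtain ⟨h1, h2⟩ := invUpd h ℓ0 u0' s0' rfl
      exact reconUpd σ ((ihU _).mpr h1) ((ihS _).mpr h2)
  · intro ℓ0 s0 hmem σ
    constructor
    · intro h
      obtain ⟨h1, h2⟩ := invUpd h ℓ0 _ _ rfl
      exact TypS.sub (TypS.inter (lkpTypS hmem h1) h2) (rebuildS ℓ0 σ)
    · intro h
      exact reconUpd σ (TypL.lkp (locApp hmem σ h)) (TypS.sub h (le_eraseS ℓ0 σ))
  · intro ℓ0 u0 w0 s0 σ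
    constructor
    · intro h
      obtain ⟨h1, h2⟩ := invUpd h ℓ0 u0 _ rfl
      obtain ⟨_, h3⟩ := invUpd h2 ℓ0 w0 s0 rfl
      rw [eraseS_idem] at h3
      exact reconUpd σ h1 h3
    · intro h
      obtain ⟨h1, h2⟩ := invUpd h ℓ0 u0 s0 rfl
      exact reconUpd σ h1 (updIrrel _ (eraseS_domS ℓ0 σ) h2)
  · intro ℓa ℓb u0 w0 s0 hne σ
    exact ⟨commuteAux hne, commuteAux (Ne.symm hne)⟩
  · intro u0 δ; exact Iff.rfl
  · intro u0 v0 a ih δ; exact (ih δ).symm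
  · intro u0 v0 w0 a a1 ih1 ih2 δ; exact (ih1 δ).trans (ih2 δ)
  · intro s0 s0' ℓ0 hmem a ihS δ
    constructor
    · intro h; exact TypL.lkp ((ihS _).mp (lkpTypS hmem h))
    · intro h
      have hmem' : ℓ0 ∈ s0'.dom := stDom a ▸ hmem
      exact TypL.lkp ((ihS _).mpr (lkpTypS hmem' h))
  · intro ℓ0 u0 s0 δ
    constructor
    · intro h
      obtain ⟨δ₀, hle, hc⟩ := genLkp h ℓ0 _ rfl
      rcases hc with hω | ht
      · exact TypL.sub TypL.omega (SubD.trans hω hle)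
      · obtain ⟨h1, _⟩ := invUpd ht ℓ0 u0 s0 rfl
        simp only [appS, if_pos rfl] at h1
        exact TypL.sub h1 hle
    · intro h; exact TypL.lkp (TypS.updA h)
  · intro ℓa ℓb u0 s0 hne δ
    constructor
    · intro h
      obtain ⟨δ₀, hle, hc⟩ := genLkp h ℓa _ rfl
      rcases hc with hω | ht
      · exact TypL.sub TypL.omega (SubD.trans hω hle)
      · obtain ⟨_, h2⟩ := invUpd ht ℓb u0 s0 rfl
        simp only [eraseS, if_neg hne] at h2
        exact TypL.sub (TypL.lkp h2) hle
    · intro h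
      obtain ⟨δ₀, hle, hc⟩ := genLkp h ℓa s0 rfl
      rcases hc with hω | ht
      · exact TypL.sub TypL.omega (SubD.trans hω hle)
      · exact TypL.sub (TypL.lkp (TypS.updB ht (Ne.symm hne))) hle

/-- pointwise context subtyping -/
def CtxLE (Γ₂ Γ : Ctx) : Prop := List.Forall₂ SubD Γ₂ Γ

lemma ctxLE_refl : ∀ Γ : Ctx, CtxLE Γ Γ
  | [] => List.Forall₂.nil
  | δ :: Γ => List.Forall₂.cons (SubD.refl δ) (ctxLE_refl Γ)

lemma ctxLE_get {Γ₂ Γ : Ctx} (h : CtxLE Γ₂ Γ) :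
    ∀ {n : ℕ} {δ : TyD}, Γ[n]? = some δ → ∃ δ₂, Γ₂[n]? = some δ₂ ∧ SubD δ₂ δ := by
  induction h with
  | nil => intro n δ h; simp at h
  | cons ha _ ih =>
      intro n δ h
      cases n with
      | zero => simp at h; subst h; exact ⟨_, by simp, ha⟩
      | succ n => simp only [List.getElem?_cons_succ] at h ⊢; exact ih h

lemma ctxLE_mid {Γ' Γ₀ : Ctx} {δa δb : TyD} (h : SubD δa δb) :
    CtxLE (Γ' ++ δa :: Γ₀) (Γ' ++ δb :: Γ₀) := by
  induction Γ' with
  | nil => exact List.Forall₂.cons h (ctxLE_refl Γ₀)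
  | cons x Γ' ih => exact List.Forall₂.cons (SubD.refl x) ih

/-- index helpers -/
lemma idx_mid (Γ' Γ₀ : Ctx) (δ : TyD) : (Γ' ++ δ :: Γ₀)[Γ'.length]? = some δ := by
  rw [List.getElem?_append_right le_rfl]; simp

lemma idx_lt {Γ' : Ctx} {n : ℕ} (h : n < Γ'.length) (L : Ctx) :
    (Γ' ++ L)[n]? = Γ'[n]? := by rw [List.getElem?_append, if_pos h]

lemma idx_gt {Γ' Γ₀ : Ctx} {δ : TyD} {m : ℕ} (h : Γ'.length < m) :
    (Γ' ++ δ :: Γ₀)[m]? = Γ₀[m - Γ'.length - 1]? := by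
  rw [List.getElem?_append_right (le_of_lt h)]
  have : m - Γ'.length = (m - Γ'.length - 1) + 1 := by omega
  rw [this]
  simp

def CtxStV (Γ : Ctx) (V : Val) (δ : TyD) : Prop := ∀ Γ₂, CtxLE Γ₂ Γ → TypV Γ₂ V δ
def CtxStC (Γ : Ctx) (M : Comp) (τ : TyT) : Prop := ∀ Γ₂, CtxLE Γ₂ Γ → TypC Γ₂ M τ

theorem ctxV {Γ : Ctx} {V : Val} {δ : TyD} (h : TypV Γ V δ) : CtxStV Γ V δ := by
  refine TypV.rec (motive_1 := fun Γ V δ _ => CtxStV Γ V δ)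
    (motive_2 := fun Γ M τ _ => CtxStC Γ M τ)
    ?_ ?_ ?_ ?_ ?_ ?_ ?_ ?_ ?_ ?_ ?_ ?_ h
  · intro Γ n δ a Γ₂ hle
    obtain ⟨δ₂, h1, h2⟩ := ctxLE_get hle a
    exact TypV.sub (TypV.var h1) h2
  · intro δ Γ M τ a ih Γ₂ hle
    exact TypV.lam (ih _ (List.Forall₂.cons (SubD.refl δ) hle))
  · intro Γ V Γ₂ hle; exact TypV.omega
  · intro Γ V δ δ' a a1 ih ih1 Γ₂ hle; exact TypV.inter (ih _ hle) (ih1 _ hle)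
  · intro Γ V δ δ' a a1 ih Γ₂ hle; exact TypV.sub (ih _ hle) a1
  · intro Γ V δ σ a ih Γ₂ hle; exact TypC.ret (ih _ hle)
  · intro Γ M σ δ' σ' V δ'' σ'' a a1 ihM ihV Γ₂ hle
    exact TypC.bind (ihM _ hle) (ihV _ hle)
  · intro δ Γ M σ κ ℓ a ih Γ₂ hle
    exact TypC.get (ih _ (List.Forall₂.cons (SubD.refl δ) hle))
  · intro Γ V δ M ℓ σ κ a a1 a2 ihV ihM Γ₂ hle
    exact TypC.set (ihV _ hle) (ihM _ hle) a2
  · intro Γ M Γ₂ hle; exact TypC.omega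
  · intro Γ M τ τ' a a1 ih ih1 Γ₂ hle; exact TypC.inter (ih _ hle) (ih1 _ hle)
  · intro Γ M τ τ' a a1 ih Γ₂ hle; exact TypC.sub (ih _ hle) a1

theorem ctxC {Γ : Ctx} {M : Comp} {τ : TyT} (h : TypC Γ M τ) : CtxStC Γ M τ := by
  refine TypC.rec (motive_1 := fun Γ V δ _ => CtxStV Γ V δ)
    (motive_2 := fun Γ M τ _ => CtxStC Γ M τ)
    ?_ ?_ ?_ ?_ ?_ ?_ ?_ ?_ ?_ ?_ ?_ ?_ h
  · intro Γ n δ a Γ₂ hle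
    obtain ⟨δ₂, h1, h2⟩ := ctxLE_get hle a
    exact TypV.sub (TypV.var h1) h2
  · intro δ Γ M τ a ih Γ₂ hle
    exact TypV.lam (ih _ (List.Forall₂.cons (SubD.refl δ) hle))
  · intro Γ V Γ₂ hle; exact TypV.omega
  · intro Γ V δ δ' a a1 ih ih1 Γ₂ hle; exact TypV.inter (ih _ hle) (ih1 _ hle)
  · intro Γ V δ δ' a a1 ih Γ₂ hle; exact TypV.sub (ih _ hle) a1
  · intro Γ V δ σ a ih Γ₂ hle; exact TypC.ret (ih _ hle)
  · intro Γ M σ δ' σ' V δ'' σ'' a a1 ihM ihV Γ₂ hle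
    exact TypC.bind (ihM _ hle) (ihV _ hle)
  · intro δ Γ M σ κ ℓ a ih Γ₂ hle
    exact TypC.get (ih _ (List.Forall₂.cons (SubD.refl δ) hle))
  · intro Γ V δ M ℓ σ κ a a1 a2 ihV ihM Γ₂ hle
    exact TypC.set (ihV _ hle) (ihM _ hle) a2
  · intro Γ M Γ₂ hle; exact TypC.omega
  · intro Γ M τ τ' a a1 ih ih1 Γ₂ hle; exact TypC.inter (ih _ hle) (ih1 _ hle)
  · intro Γ M τ τ' a a1 ih Γ₂ hle; exact TypC.sub (ih _ hle) a1

def StrV (Γ : Ctx) (W : Val) (δ : TyD) : Prop :=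
  ∀ Δ₁ δ' Δ₂ V, Γ = Δ₁ ++ δ' :: Δ₂ → W = Val.shiftAux Δ₁.length V →
    TypV (Δ₁ ++ Δ₂) V δ
def StrC (Γ : Ctx) (P : Comp) (τ : TyT) : Prop :=
  ∀ Δ₁ δ' Δ₂ M, Γ = Δ₁ ++ δ' :: Δ₂ → P = Comp.shiftAux Δ₁.length M →
    TypC (Δ₁ ++ Δ₂) M τ

theorem strV {Γ : Ctx} {W : Val} {δ : TyD} (h : TypV Γ W δ) : StrV Γ W δ := by
  refine TypV.rec (motive_1 := fun Γ W δ _ => StrV Γ W δ)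
    (motive_2 := fun Γ P τ _ => StrC Γ P τ)
    ?_ ?_ ?_ ?_ ?_ ?_ ?_ ?_ ?_ ?_ ?_ ?_ h
  · intro Γ n δ a Δ₁ δ' Δ₂ V heq hsh
    subst heq
    cases V with
    | var m =>
        simp only [Val.shiftAux] at hsh
        split at hsh
        · next hc =>
            injection hsh with hsh; subst hsh
            refine TypV.var ?_
            rw [idx_lt hc, ← idx_lt hc (δ' :: Δ₂)]
            exact a
        · next hc =>
            injection hsh with hsh; subst hsh
            push_neg at hc
            refine TypV.var ?_
            rw [List.getElem?_append_right hc]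
            rw [idx_gt (by omega)] at a
            have : m + 1 - Δ₁.length - 1 = m - Δ₁.length := by omega
            rw [this] at a
            exact a
    | lam M0 => exact absurd hsh (by simp [Val.shiftAux])
  · intro δ Γ M τ a ih Δ₁ δ' Δ₂ V heq hsh
    subst heq
    cases V with
    | var m =>
        simp only [Val.shiftAux] at hsh
        split at hsh <;> exact absurd hsh (by simp)
    | lam M0 =>
        injection hsh with hsh
        exact TypV.lam (ih (δ :: Δ₁) δ' Δ₂ M0 rfl hsh)
  · intro Γ V Δ₁ δ' Δ₂ V0 heq hsh; exact TypV.omega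
  · intro Γ V δ δ2 a a1 ih ih1 Δ₁ δ' Δ₂ V0 heq hsh
    exact TypV.inter (ih _ _ _ _ heq hsh) (ih1 _ _ _ _ heq hsh)
  · intro Γ V δ δ2 a a1 ih Δ₁ δ' Δ₂ V0 heq hsh
    exact TypV.sub (ih _ _ _ _ heq hsh) a1
  · intro Γ V δ σ a ih Δ₁ δ' Δ₂ M heq hsh
    cases M with
    | ret V0 =>
        injection hsh with hsh
        exact TypC.ret (ih _ _ _ _ heq hsh)
    | bind _ _ => exact absurd hsh (by simp [Comp.shiftAux])
    | get _ _ => exact absurd hsh (by simp [Comp.shiftAux])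
    | set _ _ _ => exact absurd hsh (by simp [Comp.shiftAux])
  · intro Γ M σ δ' σ' V δ'' σ'' a a1 ihM ihV Δ₁ δ0 Δ₂ M0 heq hsh
    cases M0 with
    | bind Ma Vb =>
        injection hsh with h1 h2
        exact TypC.bind (ihM _ _ _ _ heq h1) (ihV _ _ _ _ heq h2)
    | ret _ => exact absurd hsh (by simp [Comp.shiftAux])
    | get _ _ => exact absurd hsh (by simp [Comp.shiftAux])
    | set _ _ _ => exact absurd hsh (by simp [Comp.shiftAux])
  · intro δ Γ M σ κ ℓ a ih Δ₁ δ0 Δ₂ M0 heq hsh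
    cases M0 with
    | get ℓ0 Mb =>
        injection hsh with h1 h2
        subst h1; subst heq
        exact TypC.get (ih (δ :: Δ₁) δ0 Δ₂ Mb rfl h2)
    | ret _ => exact absurd hsh (by simp [Comp.shiftAux])
    | bind _ _ => exact absurd hsh (by simp [Comp.shiftAux])
    | set _ _ _ => exact absurd hsh (by simp [Comp.shiftAux])
  · intro Γ V δ M ℓ σ κ a a1 a2 ihV ihM Δ₁ δ0 Δ₂ M0 heq hsh
    cases M0 with
    | set ℓ0 Va Mb =>
        injection hsh with h1 h2 h3
        subst h1
        exact TypC.set (ihV _ _ _ _ heq h2) (ihM _ _ _ _ heq h3) a2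
    | ret _ => exact absurd hsh (by simp [Comp.shiftAux])
    | bind _ _ => exact absurd hsh (by simp [Comp.shiftAux])
    | get _ _ => exact absurd hsh (by simp [Comp.shiftAux])
  · intro Γ M Δ₁ δ0 Δ₂ M0 heq hsh; exact TypC.omega
  · intro Γ M τ τ' a a1 ih ih1 Δ₁ δ0 Δ₂ M0 heq hsh
    exact TypC.inter (ih _ _ _ _ heq hsh) (ih1 _ _ _ _ heq hsh)
  · intro Γ M τ τ' a a1 ih Δ₁ δ0 Δ₂ M0 heq hsh
    exact TypC.sub (ih _ _ _ _ heq hsh) a1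

def ExpV (Γ : Ctx) (P : Val) (δ : TyD) : Prop :=
  ∀ Γ' Γ₀ W V, Γ = Γ' ++ Γ₀ → P = Val.substV Γ'.length W V →
    ∃ δ₀, TypV Γ W δ₀ ∧ TypV (Γ' ++ δ₀ :: Γ₀) V δ
def ExpC (Γ : Ctx) (P : Comp) (τ : TyT) : Prop :=
  ∀ Γ' Γ₀ W M, Γ = Γ' ++ Γ₀ → P = Comp.substC Γ'.length W M →
    ∃ δ₀, TypV Γ W δ₀ ∧ TypC (Γ' ++ δ₀ :: Γ₀) M τ

theorem expC {Γ : Ctx} {P : Comp} {τ : TyT} (h : TypC Γ P τ) : ExpC Γ P τ := by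
  refine TypC.rec (motive_1 := fun Γ P δ _ => ExpV Γ P δ)
    (motive_2 := fun Γ P τ _ => ExpC Γ P τ)
    ?_ ?_ ?_ ?_ ?_ ?_ ?_ ?_ ?_ ?_ ?_ ?_ h
  · -- var
    intro Γ n δ a Γ' Γ₀ W V heq hsub
    subst heq
    cases V with
    | var m =>
        simp only [Val.substV] at hsub
        by_cases h1 : m = Γ'.length
        · rw [if_pos h1] at hsub
          subst h1
          refine ⟨δ, ?_, TypV.var (idx_mid _ _ _)⟩
          exact hsub ▸ TypV.var a
        · rw [if_neg h1] at hsub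
          by_cases h2 : Γ'.length < m
          · rw [if_pos h2] at hsub
            injection hsub with hsub; subst hsub
            refine ⟨.omega, TypV.omega, TypV.var ?_⟩
            rw [idx_gt h2]
            rw [List.getElem?_append_right (by omega : Γ'.length ≤ m - 1)] at a
            have : m - 1 - Γ'.length = m - Γ'.length - 1 := by omega
            rw [this] at a
            exact a
          · rw [if_neg h2] at hsub
            injection hsub with hsub
            have hlt : m < Γ'.length := by omega
            subst hsub
            refine ⟨.omega, TypV.omega, TypV.var ?_⟩
            rw [idx_lt hlt]
            rw [idx_lt hlt] at a
            exact a
    | lam M0 => exact absurd hsub (by simp [Val.substV])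
  · -- lam
    intro δ Γ M τ a ih Γ' Γ₀ W V heq hsub
    subst heq
    cases V with
    | var m =>
        simp only [Val.substV] at hsub
        by_cases h1 : m = Γ'.length
        · rw [if_pos h1] at hsub
          subst h1
          exact ⟨.arrow δ τ, hsub ▸ TypV.lam a, TypV.var (idx_mid _ _ _)⟩
        · rw [if_neg h1] at hsub
          split at hsub <;> exact absurd hsub (by simp)
    | lam M0 =>
        injection hsub with hsub
        obtain ⟨δ₀, hW, hM⟩ := ih (δ :: Γ') Γ₀ (Val.shiftAux 0 W) M0 rfl hsub
        exact ⟨δ₀, strV hW [] δ (Γ' ++ Γ₀) W rfl rfl, TypV.lam hM⟩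
  · -- omega (V)
    intro Γ V Γ' Γ₀ W V0 heq hsub; exact ⟨.omega, TypV.omega, TypV.omega⟩
  · -- inter (V)
    intro Γ V δa δb a a1 ih ih1 Γ' Γ₀ W V0 heq hsub
    obtain ⟨δ₁, hW1, hV1⟩ := ih _ _ _ _ heq hsub
    obtain ⟨δ₂, hW2, hV2⟩ := ih1 _ _ _ _ heq hsub
    exact ⟨.inter δ₁ δ₂, TypV.inter hW1 hW2,
      TypV.inter (ctxV hV1 _ (ctxLE_mid SubD.interLeft))
        (ctxV hV2 _ (ctxLE_mid SubD.interRight))⟩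
  · -- sub (V)
    intro Γ V δa δb a a1 ih Γ' Γ₀ W V0 heq hsub
    obtain ⟨δ₀, hW, hV⟩ := ih _ _ _ _ heq hsub
    exact ⟨δ₀, hW, TypV.sub hV a1⟩
  · -- ret
    intro Γ V δ σ a ih Γ' Γ₀ W M0 heq hsub
    cases M0 with
    | ret V0 =>
        injection hsub with hsub
        obtain ⟨δ₀, hW, hV⟩ := ih _ _ _ _ heq hsub
        exact ⟨δ₀, hW, TypC.ret hV⟩
    | bind _ _ => exact absurd hsub (by simp [Comp.substC])
    | get _ _ => exact absurd hsub (by simp [Comp.substC])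
    | set _ _ _ => exact absurd hsub (by simp [Comp.substC])
  · -- bind
    intro Γ M σ δ' σ' V δ'' σ'' a a1 ihM ihV Γ' Γ₀ W M0 heq hsub
    cases M0 with
    | bind Ma Vb =>
        injection hsub with h1 h2
        obtain ⟨δ₁, hW1, hM1⟩ := ihM _ _ _ _ heq h1
        obtain ⟨δ₂, hW2, hV2⟩ := ihV _ _ _ _ heq h2
        exact ⟨.inter δ₁ δ₂, TypV.inter hW1 hW2,
          TypC.bind (ctxC hM1 _ (ctxLE_mid SubD.interLeft))
            (ctxV hV2 _ (ctxLE_mid SubD.interRight))⟩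
    | ret _ => exact absurd hsub (by simp [Comp.substC])
    | get _ _ => exact absurd hsub (by simp [Comp.substC])
    | set _ _ _ => exact absurd hsub (by simp [Comp.substC])
  · -- get
    intro δ Γ M σ κ ℓ a ih Γ' Γ₀ W M0 heq hsub
    subst heq
    cases M0 with
    | get ℓ0 Mb =>
        injection hsub with h1 h2
        subst h1
        obtain ⟨δ₀, hW, hM⟩ := ih (δ :: Γ') Γ₀ (Val.shiftAux 0 W) Mb rfl h2
        exact ⟨δ₀, strV hW [] δ (Γ' ++ Γ₀) W rfl rfl, TypC.get hM⟩
    | ret _ => exact absurd hsub (by simp [Comp.substC])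
    | bind _ _ => exact absurd hsub (by simp [Comp.substC])
    | set _ _ _ => exact absurd hsub (by simp [Comp.substC])
  · -- set
    intro Γ V δ M ℓ σ κ a a1 a2 ihV ihM Γ' Γ₀ W M0 heq hsub
    cases M0 with
    | set ℓ0 Va Mb =>
        injection hsub with h1 h2 h3
        subst h1
        obtain ⟨δ₁, hW1, hV1⟩ := ihV _ _ _ _ heq h2
        obtain ⟨δ₂, hW2, hM2⟩ := ihM _ _ _ _ heq h3
        exact ⟨.inter δ₁ δ₂, TypV.inter hW1 hW2,
          TypC.set (ctxV hV1 _ (ctxLE_mid SubD.interLeft))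
            (ctxC hM2 _ (ctxLE_mid SubD.interRight)) a2⟩
    | ret _ => exact absurd hsub (by simp [Comp.substC])
    | bind _ _ => exact absurd hsub (by simp [Comp.substC])
    | get _ _ => exact absurd hsub (by simp [Comp.substC])
  · -- omega (C)
    intro Γ M Γ' Γ₀ W M0 heq hsub; exact ⟨.omega, TypV.omega, TypC.omega⟩
  · -- inter (C)
    intro Γ M τ τ' a a1 ih ih1 Γ' Γ₀ W M0 heq hsub
    obtain ⟨δ₁, hW1, hM1⟩ := ih _ _ _ _ heq hsub
    obtain ⟨δ₂, hW2, hM2⟩ := ih1 _ _ _ _ heq hsub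
    exact ⟨.inter δ₁ δ₂, TypV.inter hW1 hW2,
      TypC.inter (ctxC hM1 _ (ctxLE_mid SubD.interLeft))
        (ctxC hM2 _ (ctxLE_mid SubD.interRight))⟩
  · -- sub (C)
    intro Γ M τ τ' a a1 ih Γ' Γ₀ W M0 heq hsub
    obtain ⟨δ₀, hW, hM⟩ := ih _ _ _ _ heq hsub
    exact ⟨δ₀, hW, TypC.sub hM a1⟩

lemma buildBind {Γ : Ctx} {V : Val} {M : Comp} {δ : TyD} {σ : TyS} :
    ∀ κ : TyC, TypV Γ V δ → TypC (δ :: Γ) M (.arrow σ κ) →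
      TypC Γ (.bind (.ret V) (.lam M)) (.arrow σ κ)
  | .prod δ'' σ'', hV, hM => TypC.bind (TypC.ret hV) (TypV.lam hM)
  | .omega, _, _ =>
      TypC.sub
        (TypC.bind (TypC.ret (TypV.omega (V := V)))
          (TypV.lam (typC_arrow_pw _ M σ)))
        (SubT.arrowMono (SubS.refl σ) (SubC.leOmega pw))
  | .inter κ₁ κ₂, hV, hM =>
      TypC.sub
        (TypC.inter
          (buildBind κ₁ hV (TypC.sub hM (SubT.arrowMono (SubS.refl σ) SubC.interLeft)))
          (buildBind κ₂ hV (TypC.sub hM (SubT.arrowMono (SubS.refl σ) SubC.interRight))))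
        SubT.arrowInter

lemma conf_inv {Γ : Ctx} {M : Comp} {s : Store} {κ : TyC} (h : TypConf Γ M s κ) :
    ∃ σ, TypC Γ M (.arrow σ κ) ∧ TypS Γ s σ := by
  induction h with
  | conf h1 h2 => exact ⟨_, h1, h2⟩
  | omega => exact ⟨.omega, TypC.sub TypC.omega SubT.omegaArrow, TypS.omega⟩
  | inter h1 h2 ih1 ih2 =>
      obtain ⟨σ₁, a1, b1⟩ := ih1
      obtain ⟨σ₂, a2, b2⟩ := ih2
      refine ⟨.inter σ₁ σ₂, ?_, TypS.inter b1 b2⟩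
      exact TypC.sub
        (TypC.inter (TypC.sub a1 (SubT.arrowMono SubS.interLeft (SubC.refl _)))
          (TypC.sub a2 (SubT.arrowMono SubS.interRight (SubC.refl _))))
        SubT.arrowInter
  | sub h1 hsub ih =>
      obtain ⟨σ₀, a, b⟩ := ih
      exact ⟨σ₀, TypC.sub a (SubT.arrowMono (SubS.refl _) hsub), b⟩

lemma interC_le_append : ∀ a b : List TyC,
    SubC (InterC (a ++ b)) (.inter (InterC a) (InterC b))
  | [], b => SubC.interGlb (SubC.leOmega _) (SubC.refl _)
  | x :: a, b => by
      show SubC (.inter x (InterC (a ++ b))) (.inter (.inter x (InterC a)) (InterC b))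
      exact SubC.interGlb
        (SubC.interGlb SubC.interLeft
          (SubC.trans SubC.interRight (SubC.trans (interC_le_append a b) SubC.interLeft)))
        (SubC.trans SubC.interRight (SubC.trans (interC_le_append a b) SubC.interRight))

lemma typConf_interC {α : Type} {Γ : Ctx} {M : Comp} {s : Store} (f : α → TyC) :
    ∀ L : List α, (∀ x ∈ L, TypConf Γ M s (f x)) →
      TypConf Γ M s (InterC (L.map f))
  | [], _ => TypConf.omega
  | x :: L, h =>
      TypConf.inter (h x (by simp))
        (typConf_interC f L (fun y hy => h y (by simp [hy])))

theorem genBind {Γ : Ctx} {P : Comp} {τ : TyT} (h : TypC Γ P τ) :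
    ∀ N V, P = .bind N V → ∀ σ κ, SubT τ (.arrow σ κ) →
      ∃ L : List (TyD × TyS × TyD × TyS),
        (∀ x ∈ L, TypC Γ N (.arrow σ (.prod x.1 x.2.1)) ∧
          TypV Γ V (.arrow x.1 (.arrow x.2.1 (.prod x.2.2.1 x.2.2.2)))) ∧
        SubC (InterC (L.map fun x => .prod x.2.2.1 x.2.2.2)) κ := by
  refine TypC.rec (motive_1 := fun _ _ _ _ => True)
    (motive_2 := fun Γ P τ _ => ∀ N V, P = .bind N V → ∀ σ κ, SubT τ (.arrow σ κ) →
      ∃ L : List (TyD × TyS × TyD × TyS),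
        (∀ x ∈ L, TypC Γ N (.arrow σ (.prod x.1 x.2.1)) ∧
          TypV Γ V (.arrow x.1 (.arrow x.2.1 (.prod x.2.2.1 x.2.2.2)))) ∧
        SubC (InterC (L.map fun x => .prod x.2.2.1 x.2.2.2)) κ)
    ?_ ?_ ?_ ?_ ?_ ?_ ?_ ?_ ?_ ?_ ?_ ?_ h
  · intros; trivial
  · intros; trivial
  · intros; trivial
  · intros; trivial
  · intros; trivial
  · intro Γ V δ σ a ih N V0 heq σ0 κ hsub
    exact absurd heq (by simp)
  · intro Γ M σ0 δ' σ' V0 δ'' σ'' a a1 ihM ihV N V heq σ κ hsub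
    injection heq with h1 h2
    subst h1; subst h2
    have hκ := subT_arrow_inv hsub
    simp only [appT] at hκ
    by_cases hs : SubS σ σ0
    · rw [if_pos hs] at hκ
      refine ⟨[(δ', σ', δ'', σ'')], ?_, ?_⟩
      · intro x hx
        simp only [List.mem_singleton] at hx
        subst hx
        exact ⟨TypC.sub a (SubT.arrowMono hs (SubC.refl _)), a1⟩
      · show SubC (.inter (.prod δ'' σ'') (InterC [])) κ
        exact SubC.trans
          (SubC.interGlb SubC.interLeft (SubC.trans SubC.interLeft (subC_pw _))) hκ
    · rw [if_neg hs] at hκ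
      exact ⟨[], fun x hx => absurd hx List.not_mem_nil,
        SubC.trans SubC.omegaProd hκ⟩
  · intro δ Γ M σ0 κ0 ℓ a ih N V heq σ κ hsub
    exact absurd heq (by simp)
  · intro Γ V δ M ℓ σ0 κ0 a a1 a2 ihV ihM N V0 heq σ κ hsub
    exact absurd heq (by simp)
  · intro Γ M N V heq σ κ hsub
    have hκ := subT_arrow_inv hsub
    simp only [appT] at hκ
    exact ⟨[], fun x hx => absurd hx List.not_mem_nil,
      SubC.trans SubC.omegaProd hκ⟩
  · intro Γ M τ₁ τ₂ a a1 ih ih1 N V heq σ κ hsub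
    have hκ := subT_arrow_inv hsub
    simp only [appT] at hκ
    obtain ⟨L₁, hL1, hs1⟩ := ih N V heq σ (appT σ τ₁) (appT_sound σ τ₁)
    obtain ⟨L₂, hL2, hs2⟩ := ih1 N V heq σ (appT σ τ₂) (appT_sound σ τ₂)
    refine ⟨L₁ ++ L₂, ?_, ?_⟩
    · intro x hx
      rcases List.mem_append.mp hx with hx | hx
      · exact hL1 x hx
      · exact hL2 x hx
    · rw [List.map_append]
      exact SubC.trans (interC_le_append _ _)
        (SubC.trans (SubC.interMono hs1 hs2) hκ)
  · intro Γ M τ τ' a a1 ih N V heq σ κ hsub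
    exact ih N V heq σ κ (SubT.trans a1 hsub)

theorem red_expansion {Γ : Ctx} {p q : Comp × Store} (hr : Red p q) :
    ∀ κ, TypConf Γ q.1 q.2 κ → TypConf Γ p.1 p.2 κ := by
  induction hr with
  | beta =>
      intro κ h
      obtain ⟨σ, hC, hS⟩ := conf_inv h
      obtain ⟨δ₀, hW, hM⟩ := expC hC [] _ _ _ rfl rfl
      exact TypConf.conf (buildBind _ hW hM) hS
  | bindl hred ih =>
      intro κ h
      obtain ⟨σ, hC, hS⟩ := conf_inv h
      obtain ⟨L, hL, hsub⟩ := genBind hC _ _ rfl σ κ (SubT.refl _)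
      refine TypConf.sub (typConf_interC _ L ?_) hsub
      intro x hx
      obtain ⟨hN, hV⟩ := hL x hx
      obtain ⟨σx, hMx, hsx⟩ := conf_inv (ih _ (TypConf.conf hN hS))
      exact TypConf.conf (TypC.bind hMx hV) hsx
  | get hlk =>
      intro κ h
      obtain ⟨σ, hC, hS⟩ := conf_inv h
      obtain ⟨δ₀, hW, hM⟩ := expC hC [] _ _ _ rfl rfl
      have hloc := lkpTypS (dom_of_lkeq hlk) ((lkResp hlk δ₀).mpr (TypL.val hW))
      exact TypConf.conf (TypC.get hM) (TypS.inter hloc hS)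
  | set =>
      intro κ h
      obtain ⟨σ, hC, hS⟩ := conf_inv h
      obtain ⟨hu, hs⟩ := invUpd hS _ _ _ rfl
      exact TypConf.conf
        (TypC.set (typL_val_inv hu _ rfl)
          (TypC.sub hC (SubT.arrowMono (rebuildS _ σ) (SubC.refl κ)))
          (eraseS_domS _ σ))
        hs

/-- subject expansion. -/
theorem subject_expansion {Γ : Ctx} {M N : Comp} {s t : Store} {κ : TyC}
    (h : TypConf Γ N t κ) (hr : Red (M, s) (N, t)) :
    TypConf Γ M s κ := by
  exact red_expansion hr κ h
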